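/- Let n ≥ 1 and let H be a real symmetric n×n matrix whose off-diagonal entries are all nonpositive (a stoquastic matrix). Then there exists a vector v ∈ ℝⁿ with nonnegative entries and Σ_i v(i)² = 1 such that vᵀHv ≤ wᵀHw for every w ∈ ℝⁿ with Σ_i w(i)² = 1. In particular, the minimal eigenvalue of H is attained by a nonnegative unit vector. -/

import Mathlib

/-- A real symmetric stoquastic matrix (nonpositive off-diagonal
entries) has a nonnegative unit vector attaining the minimum of the quadratic
form over all unit vectors, i.e. attaining the minimal eigenvalue. -/
theorem stoquastic_nonneg_ground_state (n : ℕ) (hn : 1 ≤ n)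
    (H : Matrix (Fin n) (Fin n) ℝ) (hsymm : H.IsSymm)
    (hstoq : ∀ i j, i ≠ j → H i j ≤ 0) :
    ∃ v : Fin n → ℝ, (∀ i, 0 ≤ v i) ∧ (∑ i, (v i) ^ 2 = 1) ∧
      ∀ w : Fin n → ℝ, (∑ i, (w i) ^ 2 = 1) →
        ∑ i, ∑ j, v i * H i j * v j ≤ ∑ i, ∑ j, w i * H i j * w j := by
  haveI : Nonempty (Fin n) := ⟨⟨0, hn⟩⟩
  set Q : EuclideanSpace ℝ (Fin n) → ℝ := fun w => ∑ i, ∑ j, w i * H i j * w j with hQ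
  have hmem : ∀ w : EuclideanSpace ℝ (Fin n),
      w ∈ Metric.sphere (0 : EuclideanSpace ℝ (Fin n)) 1 ↔ ∑ i, (w i) ^ 2 = 1 := by
    intro w
    rw [mem_sphere_zero_iff_norm, EuclideanSpace.norm_eq]
    constructor
    · intro h
      have h2 : ∑ i, ‖w i‖ ^ 2 = 1 := by
        have := congrArg (· ^ 2) h
        simpa [Real.sq_sqrt (Finset.sum_nonneg fun i _ => sq_nonneg _)] using this
      simpa [Real.norm_eq_abs, sq_abs] using h2
    · intro h
      have h2 : ∑ i, ‖w i‖ ^ 2 = 1 := by simpa [Real.norm_eq_abs, sq_abs] using h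
      rw [h2, Real.sqrt_one]
  have hcont : Continuous Q := by
    apply continuous_finset_sum
    intro i _
    apply continuous_finset_sum
    intro j _
    exact (((EuclideanSpace.proj i).continuous.mul continuous_const).mul
      (EuclideanSpace.proj j).continuous)
  have hne : (Metric.sphere (0 : EuclideanSpace ℝ (Fin n)) 1).Nonempty := by
    refine ⟨EuclideanSpace.single ⟨0, hn⟩ 1, ?_⟩
    simp [mem_sphere_zero_iff_norm]
  obtain ⟨v, hvmem, hmin⟩ :=
    (isCompact_sphere (0 : EuclideanSpace ℝ (Fin n)) 1).exists_isMinOn hne hcont.continuousOn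
  have hvsum : ∑ i, (v i) ^ 2 = 1 := (hmem v).mp hvmem
  refine ⟨fun i => |v i|, fun i => abs_nonneg _, by simpa [sq_abs] using hvsum, ?_⟩
  intro w hw
  have hQw : Q v ≤ Q (WithLp.toLp 2 w) := hmin ((hmem (WithLp.toLp 2 w)).mpr hw)
  have hQabs : ∑ i, ∑ j, |v i| * H i j * |v j| ≤ Q v := by
    apply Finset.sum_le_sum
    intro i _
    apply Finset.sum_le_sum
    intro j _
    rcases eq_or_ne i j with rfl | hij
    · have : |v i| * H i i * |v i| = v i * H i i * v i := by
        rw [mul_comm (|v i|) (H i i), mul_assoc, abs_mul_abs_self,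
          mul_comm (v i) (H i i), mul_assoc]
      exact this.le
    · have h1 : v i * v j ≤ |v i| * |v j| := by
        calc v i * v j ≤ |v i * v j| := le_abs_self _
        _ = |v i| * |v j| := abs_mul _ _
      have h2 := mul_le_mul_of_nonpos_left h1 (hstoq i j hij)
      calc |v i| * H i j * |v j| = H i j * (|v i| * |v j|) := by ring
      _ ≤ H i j * (v i * v j) := h2
      _ = v i * H i j * v j := by ring
  exact hQabs.trans hQw
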